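/- arXiv:2205.03752 — 7 statements merged into one kernel-verified Lean document; each statement's English description precedes it below -/
import Mathlib

section
/- Let X be a random vector on Δ_{K-1} and let y : [0,1] → [0,1] satisfy E[y(X_i)] = E[X_i] for each coordinate i. Define z_i = y(X_i)/∑_j y(X_j). Then E[D(X‖z)] ≤ ∑_i E[X_i log(X_i / y(X_i))]. That is, the expected normalized loss is at most the raw loss. -/
open MeasureTheory
open scoped BigOperators

/-- Expected normalized KL loss is at most the raw loss: if `X` is a random
probability vector, `y(Xᵢ) > 0` a.s. with `E[y(Xᵢ)] = E[Xᵢ]`, and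
`zᵢ = y(Xᵢ)/∑ⱼ y(Xⱼ)`, then `E[D(X‖z)] ≤ ∑ᵢ E[Xᵢ log(Xᵢ/y(Xᵢ))]`. -/
theorem stmt_3 {Ω : Type*} [MeasurableSpace Ω] (μ : Measure Ω)
    [IsProbabilityMeasure μ]
    (K : ℕ) (X : Ω → Fin K → ℝ) (y : ℝ → ℝ)
    (hsimplex : ∀ᵐ ω ∂μ, (∀ i, 0 ≤ X ω i) ∧ ∑ i, X ω i = 1)
    (hypos : ∀ᵐ ω ∂μ, ∀ i, 0 < y (X ω i))
    (hmean : ∀ i, ∫ ω, y (X ω i) ∂μ = ∫ ω, X ω i ∂μ)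
    (hint1 : ∀ i, Integrable (fun ω => X ω i) μ)
    (hint2 : ∀ i, Integrable (fun ω => y (X ω i)) μ)
    (hint3 : ∀ i, Integrable (fun ω => X ω i * Real.log (X ω i / y (X ω i))) μ)
    (hint4 : Integrable (fun ω => Real.log (∑ j, y (X ω j))) μ) :
    ∫ ω, (∑ i, X ω i * Real.log (X ω i / (y (X ω i) / ∑ j, y (X ω j)))) ∂μ
      ≤ ∑ i, ∫ ω, X ω i * Real.log (X ω i / y (X ω i)) ∂μ := by
  -- pointwise decomposition
  have hae : ∀ᵐ ω ∂μ,
      (∑ i, X ω i * Real.log (X ω i / (y (X ω i) / ∑ j, y (X ω j))))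
        = (∑ i, X ω i * Real.log (X ω i / y (X ω i)))
          + Real.log (∑ j, y (X ω j)) := by
    filter_upwards [hsimplex, hypos] with ω hs hy
    have hK : K ≠ 0 := by rintro rfl; simpa using hs.2
    haveI : Nonempty (Fin K) := ⟨⟨0, Nat.pos_of_ne_zero hK⟩⟩
    have hSpos : 0 < ∑ j, y (X ω j) :=
      Finset.sum_pos (fun j _ => hy j) Finset.univ_nonempty
    have hterm : ∀ i, X ω i * Real.log (X ω i / (y (X ω i) / ∑ j, y (X ω j)))
        = X ω i * Real.log (X ω i / y (X ω i)) + X ω i * Real.log (∑ j, y (X ω j)) := by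
      intro i
      rcases eq_or_lt_of_le (hs.1 i) with h0 | hx
      · simp [← h0]
      · have hyi := hy i
        have : X ω i / (y (X ω i) / ∑ j, y (X ω j))
            = (X ω i / y (X ω i)) * (∑ j, y (X ω j)) := by
          field_simp
        rw [this, Real.log_mul (by positivity) (ne_of_gt hSpos), mul_add]
    rw [Finset.sum_congr rfl (fun i _ => hterm i), Finset.sum_add_distrib,
      ← Finset.sum_mul, hs.2, one_mul]
  rw [integral_congr_ae hae]
  have hintS : Integrable (fun ω => ∑ i, X ω i * Real.log (X ω i / y (X ω i))) μ :=
    integrable_finset_sum _ (fun i _ => hint3 i)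
  rw [integral_add hintS hint4, integral_finset_sum _ (fun i _ => hint3 i)]
  have hlog : ∫ ω, Real.log (∑ j, y (X ω j)) ∂μ ≤ 0 := by
    have hle : ∀ᵐ ω ∂μ, Real.log (∑ j, y (X ω j)) ≤ (∑ j, y (X ω j)) - 1 := by
      filter_upwards [hsimplex, hypos] with ω hs hy
      have hK : K ≠ 0 := by rintro rfl; simpa using hs.2
      haveI : Nonempty (Fin K) := ⟨⟨0, Nat.pos_of_ne_zero hK⟩⟩
      have hSpos : 0 < ∑ j, y (X ω j) :=
        Finset.sum_pos (fun j _ => hy j) Finset.univ_nonempty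
      exact Real.log_le_sub_one_of_pos hSpos
    have hint5 : Integrable (fun ω => (∑ j, y (X ω j)) - 1) μ :=
      (integrable_finset_sum _ (fun i _ => hint2 i)).sub (integrable_const 1)
    have h1 : ∫ ω, Real.log (∑ j, y (X ω j)) ∂μ ≤ ∫ ω, ((∑ j, y (X ω j)) - 1) ∂μ :=
      integral_mono_ae hint4 hint5 hle
    have h2 : ∫ ω, ((∑ j, y (X ω j)) - 1) ∂μ = 0 := by
      rw [integral_sub (integrable_finset_sum _ (fun i _ => hint2 i)) (integrable_const 1),
        integral_finset_sum _ (fun i _ => hint2 i)]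
      simp only [hmean]
      rw [← integral_finset_sum _ (fun i _ => hint1 i)]
      have : ∫ ω, (∑ i, X ω i) ∂μ = ∫ (_ : Ω), (1 : ℝ) ∂μ :=
        integral_congr_ae (by filter_upwards [hsimplex] with ω hs; exact hs.2)
      simp [this]
    linarith
  linarith
end

section
/- Let I = [ȳ − r/2, ȳ + r/2] ⊆ (0,1] be an interval with midpoint ȳ and width r, and let q be any probability distribution supported on I with mean m = E_{X∼q}[X]. Then E_{X∼q}[X log(X/m)] ≤ (1/2)·r²/ȳ. -/
open MeasureTheory

/-- Single-interval loss upper bound: if `q` is supported on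
`I = [ȳ − r/2, ȳ + r/2] ⊆ (0,1]` with mean `m`, then
`E[X log(X/m)] ≤ (1/2)·r²/ȳ`. -/
theorem stmt_5 (ybar r : ℝ) (hr : 0 ≤ r)
    (hI : Set.Icc (ybar - r / 2) (ybar + r / 2) ⊆ Set.Ioc (0 : ℝ) 1)
    (μ : Measure ℝ) [IsProbabilityMeasure μ]
    (hsupp : ∀ᵐ x ∂μ, x ∈ Set.Icc (ybar - r / 2) (ybar + r / 2)) :
    ∫ x, x * Real.log (x / (∫ t, t ∂μ)) ∂μ ≤ (1 / 2) * r ^ 2 / ybar := by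
  set a := ybar - r / 2 with ha_def
  set b := ybar + r / 2 with hb_def
  have hab : a ≤ b := by rw [ha_def, hb_def]; linarith
  have haI : a ∈ Set.Ioc (0:ℝ) 1 := hI ⟨le_refl a, hab⟩
  have hbI : b ∈ Set.Ioc (0:ℝ) 1 := hI ⟨hab, le_refl b⟩
  have ha : 0 < a := haI.1
  have hb1 : b ≤ 1 := hbI.2
  have hbpos : 0 < b := lt_of_lt_of_le ha hab
  have hbound : ∀ᵐ x ∂μ, ‖x‖ ≤ 1 := by
    filter_upwards [hsupp] with x hx
    have h1 : 0 < x := lt_of_lt_of_le ha hx.1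
    have h2 : x ≤ 1 := le_trans hx.2 hb1
    rw [Real.norm_eq_abs, abs_of_pos h1]; exact h2
  have hint : Integrable (fun x : ℝ => x) μ :=
    (integrable_const (1:ℝ)).mono' measurable_id.aestronglyMeasurable hbound
  set m := ∫ t, t ∂μ with hm_def
  have hconst : ∀ c : ℝ, ∫ _ : ℝ, c ∂μ = c := by
    intro c; simp
  have hm_lb : a ≤ m := by
    have := integral_mono_ae (integrable_const a) hint (hsupp.mono fun x hx => hx.1)
    simpa [hconst] using this
  have hm_ub : m ≤ b := by
    have := integral_mono_ae hint (integrable_const b) (hsupp.mono fun x hx => hx.2)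
    simpa [hconst] using this
  have hm_pos : 0 < m := lt_of_lt_of_le ha hm_lb
  have hsq : Integrable (fun x : ℝ => x ^ 2) μ := by
    refine (integrable_const (1:ℝ)).mono' ?_ ?_
    · exact (measurable_id.pow_const 2).aestronglyMeasurable
    · filter_upwards [hbound] with x hx
      rw [Real.norm_eq_abs, abs_pow]
      calc |x| ^ 2 ≤ 1 ^ 2 := by
            apply pow_le_pow_left₀ (abs_nonneg x)
            simpa [Real.norm_eq_abs] using hx
        _ = 1 := one_pow 2
  have hf : Integrable (fun x : ℝ => x * Real.log (x / m)) μ := by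
    refine (integrable_const (|Real.log a| + |Real.log b| + |Real.log m|)).mono' ?_ ?_
    · exact (measurable_id.mul ((measurable_id.div_const m).log)).aestronglyMeasurable
    · filter_upwards [hsupp, hbound] with x hx hx1
      have hxpos : 0 < x := lt_of_lt_of_le ha hx.1
      have hlog : Real.log (x / m) = Real.log x - Real.log m :=
        Real.log_div (ne_of_gt hxpos) (ne_of_gt hm_pos)
      have h1 : Real.log a ≤ Real.log x := Real.log_le_log ha hx.1
      have h2 : Real.log x ≤ Real.log b := Real.log_le_log hxpos hx.2
      have h3 : |Real.log x| ≤ |Real.log a| + |Real.log b| := by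
        rw [abs_le]; constructor
        · have := neg_abs_le (Real.log a); have := abs_nonneg (Real.log b); linarith
        · have := le_abs_self (Real.log b); have := abs_nonneg (Real.log a); linarith
      have h4 : |Real.log x - Real.log m| ≤ |Real.log x| + |Real.log m| := by
        rw [sub_eq_add_neg]
        exact (abs_add_le _ _).trans (by rw [abs_neg])
      rw [Real.norm_eq_abs, abs_mul, hlog]
      have hx1' : |x| ≤ 1 := by simpa [Real.norm_eq_abs] using hx1
      calc |x| * |Real.log x - Real.log m| ≤ 1 * (|Real.log x| + |Real.log m|) :=
            mul_le_mul hx1' h4 (abs_nonneg _) zero_le_one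
        _ ≤ |Real.log a| + |Real.log b| + |Real.log m| := by linarith
  have hpt : ∀ᵐ x ∂μ, x * Real.log (x / m) ≤ x ^ 2 / m - x := by
    filter_upwards [hsupp] with x hx
    have hxpos : 0 < x := lt_of_lt_of_le ha hx.1
    have hdiv : 0 < x / m := div_pos hxpos hm_pos
    have hl := Real.log_le_sub_one_of_pos hdiv
    have h2 : x * Real.log (x / m) ≤ x * (x / m - 1) :=
      mul_le_mul_of_nonneg_left hl (le_of_lt hxpos)
    calc x * Real.log (x / m) ≤ x * (x / m - 1) := h2
      _ = x ^ 2 / m - x := by field_simp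
  have hg : Integrable (fun x : ℝ => x ^ 2 / m - x) μ := (hsq.div_const m).sub hint
  have step1 : ∫ x, x * Real.log (x / m) ∂μ ≤ (∫ x, x ^ 2 ∂μ) / m - m := by
    have h := integral_mono_ae hf hg hpt
    rwa [integral_sub (hsq.div_const m) hint, integral_div] at h
  have hE2 : ∫ x, x ^ 2 ∂μ ≤ (a + b) * m - a * b := by
    have hptv : ∀ᵐ x ∂μ, x ^ 2 ≤ (a + b) * x - a * b := by
      filter_upwards [hsupp] with x hx
      nlinarith [mul_nonneg (sub_nonneg.2 hx.2) (sub_nonneg.2 hx.1)]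
    have h := integral_mono_ae hsq
      ((hint.const_mul (a + b)).sub (integrable_const (a * b))) hptv
    simp only [Pi.sub_apply] at h
    rwa [integral_sub (hint.const_mul (a + b)) (integrable_const (a * b)),
      integral_const_mul, hconst] at h
  have step2 : (∫ x, x ^ 2 ∂μ) / m - m ≤ ((a + b) * m - a * b) / m - m := by
    gcongr
  have hyb : 0 < ybar := by
    rw [ha_def] at ha; linarith
  have habpos : 0 < a + b := by linarith
  have hr_eq : r = b - a := by rw [ha_def, hb_def]; ring
  have key : ((a + b) * m - a * b - m ^ 2) * (a + b) ≤ r ^ 2 * m := by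
    rw [hr_eq]
    nlinarith [mul_nonneg ha.le (sq_nonneg (m - b)), mul_nonneg hbpos.le (sq_nonneg (m - a))]
  have hfin : ((a + b) * m - a * b) / m - m ≤ 1 / 2 * r ^ 2 / ybar := by
    have hab2 : a + b = 2 * ybar := by rw [ha_def, hb_def]; ring
    have h1 : (1:ℝ) / 2 * r ^ 2 / ybar = r ^ 2 / (a + b) := by
      rw [hab2]; ring
    have h2 : ((a + b) * m - a * b) / m - m = ((a + b) * m - a * b - m ^ 2) / m := by
      field_simp
    rw [h1, h2, div_le_div_iff₀ hm_pos habpos]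
    exact key
  exact le_trans step1 (le_trans step2 hfin)
end

section
/- Let p be a probability density on [0,1] with E_{X∼p}[X] = 1/K. Then there exists a joint distribution of random variables (X_1, …, X_K) such that each X_i has marginal distribution p and ∑_{i=1}^K X_i ≤ 2 almost surely. -/
open MeasureTheory
open scoped BigOperators

namespace Stmt8Aux

open Set Filter Topology ProbabilityTheory

variable (μ : Measure ℝ) [IsProbabilityMeasure μ]

/-- The (generalized) quantile function of `μ`. -/
noncomputable def g (u : ℝ) : ℝ := sInf {x | u ≤ cdf μ x}

/-- A globally monotone modification of the quantile function. -/
noncomputable def h (u : ℝ) : ℝ := if u ≤ 0 then 0 else if 1 < u then 1 else g μ u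

lemma cdf_one (hsupp : ∀ᵐ x ∂μ, x ∈ Set.Icc (0 : ℝ) 1) : cdf μ 1 = 1 := by
  have h0 : μ (Iic (1:ℝ))ᶜ = 0 := by
    refine measure_mono_null ?_ (ae_iff.mp hsupp)
    intro x hx
    simp only [compl_Iic, mem_Ioi] at hx
    simp only [mem_setOf_eq, Set.mem_Icc]
    intro hmem
    linarith [hmem.2]
  have h1 : μ (Iic (1:ℝ)) = 1 := by
    have := measure_add_measure_compl (μ := μ) (measurableSet_Iic (a := (1:ℝ)))
    rw [h0, add_zero] at this
    simpa using this
  have := ofReal_cdf μ 1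
  rw [h1] at this
  exact ENNReal.ofReal_eq_one.mp this

lemma cdf_neg (hsupp : ∀ᵐ x ∂μ, x ∈ Set.Icc (0 : ℝ) 1) {x : ℝ} (hx : x < 0) :
    cdf μ x = 0 := by
  have h0 : μ (Iic x) = 0 := by
    refine measure_mono_null ?_ (ae_iff.mp hsupp)
    intro y hy
    simp only [mem_Iic] at hy
    simp only [mem_setOf_eq, Set.mem_Icc]
    intro hmem
    linarith [hmem.1]
  have := ofReal_cdf μ x
  rw [h0, ENNReal.ofReal_eq_zero] at this
  linarith [cdf_nonneg μ x]

lemma one_mem_S (hsupp : ∀ᵐ x ∂μ, x ∈ Set.Icc (0 : ℝ) 1) {u : ℝ} (hu1 : u ≤ 1) :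
    (1:ℝ) ∈ {x | u ≤ cdf μ x} := by
  simp only [mem_setOf_eq, cdf_one μ hsupp]; exact hu1

lemma S_lb (hsupp : ∀ᵐ x ∂μ, x ∈ Set.Icc (0 : ℝ) 1) {u : ℝ} (hu0 : 0 < u) :
    ∀ x ∈ {x | u ≤ cdf μ x}, (0:ℝ) ≤ x := by
  intro x hx
  by_contra hneg
  push_neg at hneg
  rw [mem_setOf_eq, cdf_neg μ hsupp hneg] at hx
  linarith

lemma g_mem (hsupp : ∀ᵐ x ∂μ, x ∈ Set.Icc (0 : ℝ) 1) {u : ℝ} (hu0 : 0 < u) (hu1 : u ≤ 1) :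
    u ≤ cdf μ (g μ u) := by
  have hrc : ContinuousWithinAt (cdf μ) (Ici (g μ u)) (g μ u) :=
    (cdf μ).right_continuous _
  have h2 : Tendsto (cdf μ) (𝓝[>] (g μ u)) (𝓝 (cdf μ (g μ u))) :=
    hrc.tendsto.mono_left (nhdsWithin_mono _ Ioi_subset_Ici_self)
  refine ge_of_tendsto h2 ?_
  filter_upwards [self_mem_nhdsWithin] with t ht
  obtain ⟨s, hs, hst⟩ := exists_lt_of_csInf_lt ⟨1, one_mem_S μ hsupp hu1⟩ ht
  exact hs.trans (monotone_cdf μ hst.le)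

lemma g_nonneg (hsupp : ∀ᵐ x ∂μ, x ∈ Set.Icc (0 : ℝ) 1) {u : ℝ} (hu0 : 0 < u) (hu1 : u ≤ 1) :
    0 ≤ g μ u :=
  le_csInf ⟨1, one_mem_S μ hsupp hu1⟩ (S_lb μ hsupp hu0)

lemma g_le_one (hsupp : ∀ᵐ x ∂μ, x ∈ Set.Icc (0 : ℝ) 1) {u : ℝ} (hu0 : 0 < u) (hu1 : u ≤ 1) :
    g μ u ≤ 1 :=
  csInf_le ⟨0, S_lb μ hsupp hu0⟩ (one_mem_S μ hsupp hu1)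

lemma g_le_iff (hsupp : ∀ᵐ x ∂μ, x ∈ Set.Icc (0 : ℝ) 1) {u x : ℝ} (hu0 : 0 < u) (hu1 : u ≤ 1) :
    g μ u ≤ x ↔ u ≤ cdf μ x := by
  constructor
  · intro hgx
    exact (g_mem μ hsupp hu0 hu1).trans (monotone_cdf μ hgx)
  · intro hx
    exact csInf_le ⟨0, S_lb μ hsupp hu0⟩ hx

lemma h_nonneg (hsupp : ∀ᵐ x ∂μ, x ∈ Set.Icc (0 : ℝ) 1) (u : ℝ) : 0 ≤ h μ u := by
  unfold h
  split_ifs with h1 h2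
  · exact le_refl _
  · exact zero_le_one
  · exact g_nonneg μ hsupp (by linarith) (by linarith)

lemma h_le_one (hsupp : ∀ᵐ x ∂μ, x ∈ Set.Icc (0 : ℝ) 1) (u : ℝ) : h μ u ≤ 1 := by
  unfold h
  split_ifs with h1 h2
  · exact zero_le_one
  · exact le_refl _
  · exact g_le_one μ hsupp (by linarith) (by linarith)

lemma h_mono (hsupp : ∀ᵐ x ∂μ, x ∈ Set.Icc (0 : ℝ) 1) : Monotone (h μ) := by
  intro a b hab
  unfold h
  split_ifs with h1 h2 h3 h4 h5 h6 h7
  all_goals try exact le_refl _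
  all_goals try linarith
  · exact g_nonneg μ hsupp (by linarith) (by linarith)
  · exact g_le_one μ hsupp (by linarith) (by linarith)
  · exact (g_le_iff μ hsupp (by linarith) (by linarith)).mpr
      ((g_mem μ hsupp (by linarith) (by linarith)).trans' hab)

lemma h_meas (hsupp : ∀ᵐ x ∂μ, x ∈ Set.Icc (0 : ℝ) 1) : Measurable (h μ) :=
  (h_mono μ hsupp).measurable

lemma h_le_iff (hsupp : ∀ᵐ x ∂μ, x ∈ Set.Icc (0 : ℝ) 1) {u x : ℝ} (hu0 : 0 < u) (hu1 : u ≤ 1) :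
    h μ u ≤ x ↔ u ≤ cdf μ x := by
  rw [h, if_neg (by linarith), if_neg (by linarith)]
  exact g_le_iff μ hsupp hu0 hu1

lemma P_prob : IsProbabilityMeasure (volume.restrict (Ioo (0:ℝ) 1)) := by
  constructor
  simp [Real.volume_Ioo]

lemma map_h (hsupp : ∀ᵐ x ∂μ, x ∈ Set.Icc (0 : ℝ) 1) :
    (volume.restrict (Ioo (0:ℝ) 1)).map (h μ) = μ := by
  haveI := P_prob
  haveI : IsProbabilityMeasure ((volume.restrict (Ioo (0:ℝ) 1)).map (h μ)) :=
    Measure.isProbabilityMeasure_map (h_meas μ hsupp).aemeasurable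
  refine Measure.ext_of_Iic _ _ (fun x => ?_)
  rw [Measure.map_apply (h_meas μ hsupp) measurableSet_Iic,
    Measure.restrict_apply (h_meas μ hsupp measurableSet_Iic)]
  have hset : h μ ⁻¹' Iic x ∩ Ioo 0 1 = Iic (cdf μ x) ∩ Ioo 0 1 := by
    ext u
    simp only [mem_inter_iff, mem_preimage, mem_Iic, mem_Ioo]
    constructor
    · rintro ⟨h1, h2, h3⟩
      exact ⟨(h_le_iff μ hsupp h2 h3.le).mp h1, h2, h3⟩
    · rintro ⟨h1, h2, h3⟩
      exact ⟨(h_le_iff μ hsupp h2 h3.le).mpr h1, h2, h3⟩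
  rw [hset, ← ofReal_cdf]
  rcases eq_or_lt_of_le (cdf_le_one μ x) with heq | hlt
  · rw [heq]
    have : Iic (1:ℝ) ∩ Ioo 0 1 = Ioo (0:ℝ) 1 := by
      ext u; simp only [mem_inter_iff, mem_Iic, mem_Ioo]
      constructor
      · rintro ⟨_, h2, h3⟩; exact ⟨h2, h3⟩
      · rintro ⟨h2, h3⟩; exact ⟨h3.le, h2, h3⟩
    rw [this, Real.volume_Ioo]
    norm_num
  · have : Iic (cdf μ x) ∩ Ioo 0 1 = Ioc (0:ℝ) (cdf μ x) := by
      ext u; simp only [mem_inter_iff, mem_Iic, mem_Ioo, mem_Ioc]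
      constructor
      · rintro ⟨h1, h2, _⟩; exact ⟨h2, h1⟩
      · rintro ⟨h1, h2⟩; exact ⟨h2, h1, lt_of_le_of_lt h2 hlt⟩
    rw [this, Real.volume_Ioc, sub_zero]


lemma mean_h (hsupp : ∀ᵐ x ∂μ, x ∈ Set.Icc (0 : ℝ) 1) :
    ∫ u in Ioo (0:ℝ) 1, h μ u = ∫ x, x ∂μ := by
  conv_rhs => rw [← map_h μ hsupp]
  exact (integral_map (h_meas μ hsupp).aemeasurable aestronglyMeasurable_id).symm

lemma riemann (hsupp : ∀ᵐ x ∂μ, x ∈ Set.Icc (0 : ℝ) 1) {K : ℕ} (hK : 1 ≤ K)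
    (hmean : ∫ x, x ∂μ = 1 / K) {v : ℝ} (hv0 : 0 < v) (hv1 : v < (K:ℝ)⁻¹) :
    ∑ j ∈ Finset.range K, h μ (v + j / K) ≤ 2 := by
  obtain ⟨K', rfl⟩ : ∃ K', K = K' + 1 := ⟨K - 1, by omega⟩
  have hKR : (0:ℝ) < (K':ℝ) + 1 := by positivity
  have hKinv : (0:ℝ) < ((K':ℝ) + 1)⁻¹ := by positivity
  have hv1' : v < ((K':ℝ) + 1)⁻¹ := by push_cast at hv1; exact hv1
  have hmean' : ∫ x, x ∂μ = ((K':ℝ) + 1)⁻¹ := by push_cast at hmean; rw [hmean, one_div]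
  have hmono := h_mono μ hsupp
  have hintegrable : ∀ a b : ℝ, IntervalIntegrable (h μ) volume a b :=
    fun a b => hmono.intervalIntegrable
  set a : ℕ → ℝ := fun j => v + j / ((K':ℝ) + 1) with ha
  clear_value a
  have hadd : ∀ j : ℕ, a (j+1) - a j = ((K':ℝ) + 1)⁻¹ := by
    intro j
    simp only [ha]
    push_cast
    field_simp
    ring
  have hale : ∀ j : ℕ, a j ≤ a (j+1) := by
    intro j
    have := hadd j
    linarith
  have hstep : ∀ j : ℕ, ((K':ℝ) + 1)⁻¹ * h μ (a j) ≤ ∫ u in (a j)..(a (j+1)), h μ u := by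
    intro j
    have hm := intervalIntegral.integral_mono_on (hale j) intervalIntegrable_const
      (hintegrable _ _) (fun u hu => hmono hu.1)
    rwa [intervalIntegral.integral_const, smul_eq_mul, hadd j] at hm
  have hsum : ∑ j ∈ Finset.range K', ∫ u in (a j)..(a (j+1)), h μ u
      = ∫ u in (a 0)..(a K'), h μ u :=
    intervalIntegral.sum_integral_adjacent_intervals (fun k _ => hintegrable _ _)
  have ha0 : a 0 = v := by simp [ha]
  have haK' : a K' ≤ 1 := by
    have hsum1 : (K':ℝ) / ((K':ℝ) + 1) + ((K':ℝ) + 1)⁻¹ = 1 := by field_simp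
    simp only [ha]
    linarith
  have hbound2 : ∫ u in (a 0)..(a K'), h μ u ≤ ∫ u in (0:ℝ)..1, h μ u := by
    refine intervalIntegral.integral_mono_interval (by rw [ha0]; exact hv0.le) ?_ haK'
      ?_ (hintegrable _ _)
    · rw [ha0]
      simp only [ha]
      have : (0:ℝ) ≤ (K':ℝ) / ((K':ℝ) + 1) := by positivity
      linarith
    · exact Filter.Eventually.of_forall (fun u => h_nonneg μ hsupp u)
  have hI : ∫ u in (0:ℝ)..1, h μ u = ((K':ℝ) + 1)⁻¹ := by
    rw [intervalIntegral.integral_of_le zero_le_one, integral_Ioc_eq_integral_Ioo,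
      mean_h μ hsupp, hmean']
  have hmain : ((K':ℝ) + 1)⁻¹ * ∑ j ∈ Finset.range K', h μ (a j)
      ≤ ((K':ℝ) + 1)⁻¹ * 1 := by
    rw [Finset.mul_sum, mul_one]
    calc ∑ j ∈ Finset.range K', ((K':ℝ) + 1)⁻¹ * h μ (a j)
        ≤ ∑ j ∈ Finset.range K', ∫ u in (a j)..(a (j+1)), h μ u :=
          Finset.sum_le_sum (fun j _ => hstep j)
      _ = ∫ u in (a 0)..(a K'), h μ u := hsum
      _ ≤ ∫ u in (0:ℝ)..1, h μ u := hbound2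
      _ = ((K':ℝ) + 1)⁻¹ := hI
  have hsum_le : ∑ j ∈ Finset.range K', h μ (a j) ≤ 1 :=
    (mul_le_mul_iff_right₀ hKinv).mp hmain
  have hgoal : ∑ j ∈ Finset.range (K' + 1), h μ (a j) ≤ 2 := by
    rw [Finset.sum_range_succ]
    have := h_le_one μ hsupp (a K')
    linarith
  simp only [ha] at hgoal
  push_cast
  exact hgoal


lemma map_finset_sum {X Y : Type*} [MeasurableSpace X] [MeasurableSpace Y]
    {f : X → Y} (hf : Measurable f) {ι : Type*} (t : Finset ι) (m : ι → Measure X) :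
    (∑ s ∈ t, m s).map f = ∑ s ∈ t, (m s).map f := by
  classical
  induction t using Finset.induction with
  | empty => simp
  | insert _ _ hne ih =>
      rw [Finset.sum_insert hne, Finset.sum_insert hne, Measure.map_add _ _ hf, ih]

end Stmt8Aux

open MeasureTheory
open Stmt8Aux
open scoped ENNReal

/-- If `μ` is a probability distribution on `[0,1]` with mean `1/K`, then there
is a joint distribution of `(X₁,…,X_K)` with all marginals equal to `μ` and
`∑ᵢ Xᵢ ≤ 2` almost surely. -/
theorem stmt_8 (K : ℕ) (hK : 1 ≤ K) (μ : Measure ℝ) [IsProbabilityMeasure μ]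
    (hsupp : ∀ᵐ x ∂μ, x ∈ Set.Icc (0 : ℝ) 1)
    (hmean : ∫ x, x ∂μ = 1 / K) :
    ∃ ν : Measure (Fin K → ℝ), IsProbabilityMeasure ν ∧
      (∀ i, ν.map (fun x => x i) = μ) ∧
      (∀ᵐ x ∂ν, ∑ i, x i ≤ 2) := by
  haveI : NeZero K := ⟨by omega⟩
  have hKR : (0:ℝ) < (K:ℝ) := by
    have : 0 < K := by omega
    exact_mod_cast this
  have hKne : (K:ℝ≥0∞) ≠ 0 := by
    simp only [ne_eq, Nat.cast_eq_zero]
    omega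
  have hKtop : (K:ℝ≥0∞) ≠ ⊤ := ENNReal.natCast_ne_top K
  have hmeas := Stmt8Aux.h_meas μ hsupp
  set lam : Measure ℝ := (K : ℝ≥0∞) • volume.restrict (Set.Ioo 0 (K:ℝ)⁻¹) with hlam
  set Φ : Fin K → ℝ → (Fin K → ℝ) :=
    fun s v i => Stmt8Aux.h μ (v + (((i + s : Fin K) : ℕ) : ℝ) / K) with hΦ
  have hΦm : ∀ s, Measurable (Φ s) := fun s =>
    measurable_pi_lambda _ (fun i => hmeas.comp (measurable_add_const _))
  set ν : Measure (Fin K → ℝ) := (K:ℝ≥0∞)⁻¹ • ∑ s : Fin K, (lam.map (Φ s)) with hν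
  have hlamuniv : lam Set.univ = 1 := by
    rw [hlam, Measure.smul_apply, Measure.restrict_apply MeasurableSet.univ, Set.univ_inter,
      Real.volume_Ioo, sub_zero, smul_eq_mul, ENNReal.ofReal_inv_of_pos hKR,
      ENNReal.ofReal_natCast, ENNReal.mul_inv_cancel hKne hKtop]
  have hprob : IsProbabilityMeasure ν := by
    constructor
    rw [hν, Measure.smul_apply, Measure.finset_sum_apply]
    have hmapuniv : ∀ s : Fin K, (lam.map (Φ s)) Set.univ = 1 := by
      intro s
      rw [Measure.map_apply (hΦm s) MeasurableSet.univ, Set.preimage_univ, hlamuniv]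
    simp only [hmapuniv, Finset.sum_const, Finset.card_univ, Fintype.card_fin,
      nsmul_eq_mul, mul_one, smul_eq_mul]
    exact ENNReal.inv_mul_cancel hKne hKtop
  -- the key sum-of-restrictions identity
  have hdisj : Pairwise (Function.onFun Disjoint
      (fun t : Fin K => Set.Ioo (((t:ℕ):ℝ)/K) (((t:ℕ):ℝ)/K + (K:ℝ)⁻¹))) := by
    have key : ∀ (m n : ℕ), (m:ℝ)/K < (n:ℝ)/K + (K:ℝ)⁻¹ → m < n + 1 := by
      intro m n hmn
      have h2 := mul_lt_mul_of_pos_right hmn hKR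
      rw [div_mul_cancel₀ _ (ne_of_gt hKR), add_mul, div_mul_cancel₀ _ (ne_of_gt hKR),
        inv_mul_cancel₀ (ne_of_gt hKR)] at h2
      exact_mod_cast h2
    intro t t' hne
    simp only [Function.onFun]
    rw [Set.disjoint_left]
    intro u hu hu'
    simp only [Set.mem_Ioo] at hu hu'
    have h1 := key _ _ (hu.1.trans hu'.2)
    have h2 := key _ _ (hu'.1.trans hu.2)
    exact hne (Fin.ext (by omega))
  have hsub : (⋃ t : Fin K, Set.Ioo (((t:ℕ):ℝ)/K) (((t:ℕ):ℝ)/K + (K:ℝ)⁻¹))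
      ⊆ Set.Ioo (0:ℝ) 1 := by
    rintro u hu
    simp only [Set.mem_iUnion, Set.mem_Ioo] at hu ⊢
    obtain ⟨t, h1, h2⟩ := hu
    have hpos : (0:ℝ) ≤ ((t:ℕ):ℝ)/K := by positivity
    constructor
    · linarith
    · have ht : ((t:ℕ):ℝ) + 1 ≤ (K:ℝ) := by exact_mod_cast t.isLt
      have h3 : (((t:ℕ):ℝ) + 1)/K ≤ 1 := by rw [div_le_one hKR]; exact ht
      have h4 : ((t:ℕ):ℝ)/K + (K:ℝ)⁻¹ = (((t:ℕ):ℝ)+1)/K := by field_simp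
      linarith
  have hdiff : Set.Ioo (0:ℝ) 1 \ (⋃ t : Fin K, Set.Ioo (((t:ℕ):ℝ)/K) (((t:ℕ):ℝ)/K + (K:ℝ)⁻¹))
      ⊆ Set.range (fun j : ℕ => (j:ℝ)/K) := by
    rintro u ⟨hu, hnot⟩
    simp only [Set.mem_iUnion, not_exists, Set.mem_Ioo, not_and] at hnot
    obtain ⟨hu0, hu1⟩ := hu
    set j := ⌊u * K⌋₊ with hj
    have hjle : (j:ℝ) ≤ u * K := Nat.floor_le (by positivity)
    have hjlt : u * K < (j:ℝ) + 1 := Nat.lt_floor_add_one _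
    have hjK : j < K := by
      refine (Nat.floor_lt (by positivity)).mpr ?_
      have : u * K < 1 * K := by nlinarith
      simpa using this
    have hnott := hnot ⟨j, hjK⟩
    have hle : (j:ℝ)/K ≤ u := by rw [div_le_iff₀ hKR]; exact hjle
    have hlt : u < (j:ℝ)/K + (K:ℝ)⁻¹ := by
      have h4 : (j:ℝ)/K + (K:ℝ)⁻¹ = ((j:ℝ)+1)/K := by field_simp
      rw [h4, lt_div_iff₀ hKR]
      linarith
    have heq : u = (j:ℝ)/K := by
      by_contra hne2
      have hlt2 : (j:ℝ)/K < u := lt_of_le_of_ne hle (Ne.symm hne2)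
      exact hnott hlt2 hlt
    exact ⟨j, heq.symm⟩
  have haeq : (⋃ t : Fin K, Set.Ioo (((t:ℕ):ℝ)/K) (((t:ℕ):ℝ)/K + (K:ℝ)⁻¹))
      =ᵐ[volume] Set.Ioo (0:ℝ) 1 := by
    refine (MeasureTheory.ae_eq_set).mpr ⟨?_, ?_⟩
    · rw [Set.diff_eq_empty.mpr hsub]
      exact measure_empty
    · exact measure_mono_null hdiff ((Set.countable_range _).measure_zero _)
  have hunion_res : ∑ t : Fin K,
      volume.restrict (Set.Ioo (((t:ℕ):ℝ)/K) (((t:ℕ):ℝ)/K + (K:ℝ)⁻¹))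
      = volume.restrict (Set.Ioo (0:ℝ) 1) := by
    rw [← Measure.sum_fintype, ← Measure.restrict_iUnion hdisj (fun t => measurableSet_Ioo)]
    exact Measure.restrict_congr_set haeq
  -- marginals
  have hmarg : ∀ i, ν.map (fun x => x i) = μ := by
    intro i
    have hei : Measurable (fun x : Fin K → ℝ => x i) := measurable_pi_apply i
    rw [hν, Measure.map_smul, Stmt8Aux.map_finset_sum hei]
    have hterm : ∀ s : Fin K, (lam.map (Φ s)).map (fun x => x i)
        = lam.map (fun v => Stmt8Aux.h μ (v + (((i + s : Fin K) : ℕ) : ℝ) / K)) := by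
      intro s
      rw [Measure.map_map hei (hΦm s)]
      rfl
    have hreindex : ∑ s : Fin K, (lam.map (Φ s)).map (fun x => x i)
        = ∑ t : Fin K, lam.map (fun v => Stmt8Aux.h μ (v + (((t : Fin K) : ℕ) : ℝ) / K)) := by
      simp only [hterm]
      exact Fintype.sum_equiv (Equiv.addLeft i)
        (fun s => lam.map (fun v => Stmt8Aux.h μ (v + (((i + s : Fin K) : ℕ) : ℝ) / K)))
        (fun t => lam.map (fun v => Stmt8Aux.h μ (v + (((t : Fin K) : ℕ) : ℝ) / K)))
        (fun s => rfl)
    rw [hreindex]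
    have hshift : ∀ t : Fin K,
        lam.map (fun v => Stmt8Aux.h μ (v + (((t : Fin K) : ℕ) : ℝ) / K))
        = (K:ℝ≥0∞) • (volume.restrict
            (Set.Ioo (((t:ℕ):ℝ)/K) (((t:ℕ):ℝ)/K + (K:ℝ)⁻¹))).map (Stmt8Aux.h μ) := by
      intro t
      set c : ℝ := ((t:ℕ):ℝ)/K with hc
      have hcomp : (fun v => Stmt8Aux.h μ (v + c)) = (Stmt8Aux.h μ) ∘ (fun v => v + c) := rfl
      have hres : (volume.restrict (Set.Ioo 0 (K:ℝ)⁻¹)).map (fun v => v + c)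
          = volume.restrict (Set.Ioo c (c + (K:ℝ)⁻¹)) := by
        have hpre : (fun v : ℝ => v + c) ⁻¹' (Set.Ioo c (c + (K:ℝ)⁻¹))
            = Set.Ioo 0 (K:ℝ)⁻¹ := by
          ext v
          simp only [Set.mem_preimage, Set.mem_Ioo]
          constructor <;> intro hh <;> exact ⟨by linarith [hh.1], by linarith [hh.2]⟩
        rw [← hpre, ← Measure.restrict_map (measurable_add_const c) measurableSet_Ioo,
          (measurePreserving_add_right volume c).map_eq]
      rw [hlam, Measure.map_smul, hcomp, ← Measure.map_map hmeas (measurable_add_const c), hres]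
    simp only [hshift]
    rw [← Finset.smul_sum, ← Stmt8Aux.map_finset_sum hmeas, hunion_res, smul_smul,
      ENNReal.inv_mul_cancel hKne hKtop, one_smul]
    exact Stmt8Aux.map_h μ hsupp
  -- almost sure bound
  have hae : ∀ᵐ x ∂ν, ∑ i, x i ≤ 2 := by
    have hsummeas : Measurable (fun x : Fin K → ℝ => ∑ i, x i) :=
      Finset.measurable_sum Finset.univ (fun i _ => measurable_pi_apply i)
    have hAm : MeasurableSet {x : Fin K → ℝ | 2 < ∑ i, x i} :=
      measurableSet_lt measurable_const hsummeas
    rw [MeasureTheory.ae_iff]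
    have hset : {x : Fin K → ℝ | ¬ ∑ i, x i ≤ 2} = {x | 2 < ∑ i, x i} := by
      ext x; simp [not_le]
    rw [hset, hν, Measure.smul_apply, Measure.finset_sum_apply]
    have hzero : ∀ s ∈ Finset.univ, (lam.map (Φ s)) {x : Fin K → ℝ | 2 < ∑ i, x i} = 0 := by
      intro s _
      rw [Measure.map_apply (hΦm s) hAm, hlam, Measure.smul_apply,
        Measure.restrict_apply ((hΦm s) hAm)]
      have hempty : Φ s ⁻¹' {x : Fin K → ℝ | 2 < ∑ i, x i} ∩ Set.Ioo 0 (K:ℝ)⁻¹ = ∅ := by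
        rw [Set.eq_empty_iff_forall_notMem]
        rintro v ⟨hv1, hv2⟩
        simp only [Set.mem_preimage, Set.mem_setOf_eq, hΦ] at hv1
        simp only [Set.mem_Ioo] at hv2
        have hre : ∑ i : Fin K, Stmt8Aux.h μ (v + (((i + s : Fin K) : ℕ) : ℝ)/K)
            = ∑ j : Fin K, Stmt8Aux.h μ (v + (((j : Fin K) : ℕ) : ℝ)/K) :=
          Fintype.sum_equiv (Equiv.addRight s)
            (fun i => Stmt8Aux.h μ (v + (((i + s : Fin K) : ℕ) : ℝ)/K))
            (fun j => Stmt8Aux.h μ (v + (((j : Fin K) : ℕ) : ℝ)/K))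
            (fun i => rfl)
        have hb : ∑ i : Fin K, Stmt8Aux.h μ (v + (((i + s : Fin K) : ℕ) : ℝ)/K) ≤ 2 := by
          rw [hre, Fin.sum_univ_eq_sum_range (fun j : ℕ => Stmt8Aux.h μ (v + (j:ℝ)/K))]
          exact Stmt8Aux.riemann μ hsupp hK hmean hv2.1 hv2.2
        linarith
      rw [hempty, measure_empty, smul_eq_mul, mul_zero]
    rw [Finset.sum_eq_zero hzero, smul_eq_mul, mul_zero]
  exact ⟨ν, hprob, hmarg, hae⟩
end

section
/- Let p be a probability density on [0,1] and f : [0,1] → [0,1] a monotonically increasing absolutely continuous function with ∫₀¹ f'(x) dx = 1 and f'(x) > 0 a.e. Then (1/24)·∫₀¹ p(x)·f'(x)^{-2}·x^{-1} dx ≥ (1/24)·(∫₀¹ (p(x)/x)^{1/3} dx)³, with equality when f'(x) is proportional to (p(x)/x)^{1/3}. -/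
open MeasureTheory

lemma aux_memLp_of_integrable_rpow {μ : Measure ℝ} {F : ℝ → ℝ} {r : ℝ} (hr : 1 ≤ r)
    (hmeas : AEStronglyMeasurable F μ) (hnn : ∀ᵐ x ∂μ, 0 ≤ F x)
    (hint : Integrable (fun x => F x ^ r) μ) : MemLp F (ENNReal.ofReal r) μ := by
  have h0 : ENNReal.ofReal r ≠ 0 := (ENNReal.ofReal_pos.mpr (by linarith)).ne'
  have hne : ENNReal.ofReal r ≠ ⊤ := ENNReal.ofReal_ne_top
  refine (memLp_norm_rpow_iff (p := ENNReal.ofReal r) (q := ENNReal.ofReal r) hmeas h0 hne).mp ?_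
  rw [ENNReal.div_self h0 hne, memLp_one_iff_integrable]
  refine hint.congr ?_
  filter_upwards [hnn] with x hx
  rw [ENNReal.toReal_ofReal (by linarith), Real.norm_of_nonneg hx]

/-- Calculus-of-variations lower bound for the asymptotic compander loss:
for a density `p` on `[0,1]` and a monotone absolutely continuous compander
`f` with a.e. derivative `f' > 0` and `∫₀¹ f' = 1`,
`(1/24)·∫ p·f'⁻²·x⁻¹ ≥ (1/24)·(∫ (p/x)^{1/3})³`, with equality when
`f'` is proportional to `(p/x)^{1/3}`. -/
theorem stmt_12 (p f f' : ℝ → ℝ)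
    (hp : ∀ x ∈ Set.Icc (0 : ℝ) 1, 0 ≤ p x)
    (hpint : (∫ x in Set.Icc (0 : ℝ) 1, p x) = 1)
    (hmono : MonotoneOn f (Set.Icc 0 1))
    (hderiv : ∀ᵐ x ∂(volume.restrict (Set.Icc (0 : ℝ) 1)), HasDerivAt f (f' x) x)
    (hf'pos : ∀ᵐ x ∂(volume.restrict (Set.Icc (0 : ℝ) 1)), 0 < f' x)
    (hf'int : (∫ x in Set.Icc (0 : ℝ) 1, f' x) = 1)
    (hLint : IntegrableOn (fun x => p x * f' x ^ (-2 : ℝ) * x⁻¹) (Set.Icc 0 1)) :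
    (1 / 24) * (∫ x in Set.Icc (0 : ℝ) 1, (p x / x) ^ ((1 : ℝ) / 3)) ^ 3
      ≤ (1 / 24) * ∫ x in Set.Icc (0 : ℝ) 1, p x * f' x ^ (-2 : ℝ) * x⁻¹
    ∧ ((∀ᵐ x ∂(volume.restrict (Set.Icc (0 : ℝ) 1)),
          f' x = (∫ t in Set.Icc (0 : ℝ) 1, (p t / t) ^ ((1 : ℝ) / 3))⁻¹
            * (p x / x) ^ ((1 : ℝ) / 3)) →
        (1 / 24) * ∫ x in Set.Icc (0 : ℝ) 1, p x * f' x ^ (-2 : ℝ) * x⁻¹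
          = (1 / 24) * (∫ x in Set.Icc (0 : ℝ) 1, (p x / x) ^ ((1 : ℝ) / 3)) ^ 3) := by
  set μ : Measure ℝ := volume.restrict (Set.Icc (0 : ℝ) 1) with hμdef
  set L : ℝ → ℝ := fun x => p x * f' x ^ (-2 : ℝ) * x⁻¹ with hLdef
  set g : ℝ → ℝ := fun x => (p x / x) ^ ((1 : ℝ) / 3) with hgdef
  -- basic a.e. facts
  have h01 : ∀ᵐ x ∂μ, x ∈ Set.Icc (0 : ℝ) 1 := ae_restrict_mem measurableSet_Icc
  have hxne : ∀ᵐ x ∂μ, x ≠ 0 := by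
    refine ae_restrict_of_ae ?_
    rw [ae_iff]
    have : {x : ℝ | ¬ x ≠ 0} = {0} := by ext y; simp
    rw [this]; exact measure_singleton 0
  have hxpos : ∀ᵐ x ∂μ, 0 < x := by
    filter_upwards [h01, hxne] with x hx hne
    exact lt_of_le_of_ne hx.1 (Ne.symm hne)
  have hpae : ∀ᵐ x ∂μ, 0 ≤ p x := by
    filter_upwards [h01] with x hx using hp x hx
  have hLnn : ∀ᵐ x ∂μ, 0 ≤ L x := by
    filter_upwards [hpae, hxpos, hf'pos] with x hpx hxp hfx
    exact mul_nonneg (mul_nonneg hpx (Real.rpow_nonneg hfx.le _)) (inv_nonneg.2 hxp.le)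
  -- integrability of f'
  have hf'integ : Integrable f' μ := by
    by_contra h
    rw [integral_undef h] at hf'int
    norm_num at hf'int
  have hLinteg : Integrable L μ := hLint
  -- the two Hölder factors
  set F : ℝ → ℝ := fun x => L x ^ ((1 : ℝ) / 3) with hFdef
  set G : ℝ → ℝ := fun x => f' x ^ ((2 : ℝ) / 3) with hGdef
  have hFmeas : AEStronglyMeasurable F μ :=
    (hLinteg.aemeasurable.pow aemeasurable_const).aestronglyMeasurable
  have hGmeas : AEStronglyMeasurable G μ :=
    (hf'integ.aemeasurable.pow aemeasurable_const).aestronglyMeasurable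
  have hFnn : ∀ᵐ x ∂μ, 0 ≤ F x := by
    filter_upwards [hLnn] with x hx using Real.rpow_nonneg hx _
  have hGnn : ∀ᵐ x ∂μ, 0 ≤ G x := by
    filter_upwards [hf'pos] with x hx using Real.rpow_nonneg hx.le _
  have hF3 : ∀ᵐ x ∂μ, F x ^ (3 : ℝ) = L x := by
    filter_upwards [hLnn] with x hx
    rw [hFdef, ← Real.rpow_mul hx]
    norm_num
  have hG32 : ∀ᵐ x ∂μ, G x ^ ((3 : ℝ) / 2) = f' x := by
    filter_upwards [hf'pos] with x hx
    rw [hGdef, ← Real.rpow_mul hx.le]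
    norm_num
  have hFmem : MemLp F (ENNReal.ofReal 3) μ :=
    aux_memLp_of_integrable_rpow (by norm_num) hFmeas hFnn
      (hLinteg.congr (by filter_upwards [hF3] with x hx using hx.symm))
  have hGmem : MemLp G (ENNReal.ofReal (3 / 2)) μ :=
    aux_memLp_of_integrable_rpow (by norm_num) hGmeas hGnn
      (hf'integ.congr (by filter_upwards [hG32] with x hx using hx.symm))
  have hconj : Real.HolderConjugate 3 (3 / 2) := Real.holderConjugate_iff.mpr ⟨by norm_num, by norm_num⟩
  have key := integral_mul_le_Lp_mul_Lq_of_nonneg (μ := μ) hconj hFnn hGnn hFmem hGmem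
  -- identify the three integrals
  have hFGg : ∀ᵐ x ∂μ, F x * G x = g x := by
    filter_upwards [hpae, hxpos, hf'pos] with x hpx hxp hfx
    have ha : (0 : ℝ) ≤ p x / x := div_nonneg hpx hxp.le
    have h1 : L x = (p x / x) * f' x ^ (-2 : ℝ) := by
      rw [hLdef]; simp only [div_eq_mul_inv]; ring
    show L x ^ ((1:ℝ)/3) * f' x ^ ((2:ℝ)/3) = g x
    rw [h1, Real.mul_rpow ha (Real.rpow_nonneg hfx.le _),
      ← Real.rpow_mul hfx.le, mul_assoc, ← Real.rpow_add hfx]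
    norm_num [hgdef]
  have hIFG : (∫ x, F x * G x ∂μ) = ∫ x, g x ∂μ := integral_congr_ae hFGg
  have hIF3 : (∫ x, F x ^ (3 : ℝ) ∂μ) = ∫ x, L x ∂μ := integral_congr_ae hF3
  have hIG32 : (∫ x, G x ^ ((3 : ℝ) / 2) ∂μ) = 1 := by
    rw [integral_congr_ae hG32]; exact hf'int
  rw [hIFG, hIF3, hIG32] at key
  have hA : (0 : ℝ) ≤ ∫ x, g x ∂μ := by
    refine setIntegral_nonneg measurableSet_Icc fun x hx => ?_
    exact Real.rpow_nonneg (div_nonneg (hp x hx) hx.1) _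
  have hB : (0 : ℝ) ≤ ∫ x, L x ∂μ := integral_nonneg_of_ae hLnn
  have key2 : (∫ x, g x ∂μ) ≤ (∫ x, L x ∂μ) ^ ((1 : ℝ) / 3) := by
    calc (∫ x, g x ∂μ) ≤ (∫ x, L x ∂μ) ^ ((1:ℝ)/3) * 1 ^ ((1:ℝ)/(3/2)) := key
    _ = (∫ x, L x ∂μ) ^ ((1:ℝ)/3) := by rw [Real.one_rpow, mul_one]
  have hmain : (∫ x, g x ∂μ) ^ 3 ≤ ∫ x, L x ∂μ := by
    calc (∫ x, g x ∂μ) ^ 3 ≤ ((∫ x, L x ∂μ) ^ ((1:ℝ)/3)) ^ 3 :=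
          pow_le_pow_left₀ hA key2 3
    _ = ∫ x, L x ∂μ := by
        rw [← Real.rpow_natCast ((∫ x, L x ∂μ) ^ ((1:ℝ)/3)) 3, ← Real.rpow_mul hB]
        norm_num
  constructor
  · have h24 : (0:ℝ) ≤ 1/24 := by norm_num
    exact mul_le_mul_of_nonneg_left hmain h24
  · -- equality case
    intro heq
    set c : ℝ := ∫ t in Set.Icc (0 : ℝ) 1, (p t / t) ^ ((1 : ℝ) / 3) with hcdef
    have hμne : μ ≠ 0 := by
      intro h
      have : μ Set.univ = 0 := by rw [h]; simp
      rw [hμdef, Measure.restrict_apply_univ, Real.volume_Icc] at this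
      norm_num at this
    have hcne : c ≠ 0 := by
      intro hc
      have : ∀ᵐ x ∂μ, False := by
        filter_upwards [hf'pos, heq] with x hx hxe
        rw [hxe, hc, inv_zero, zero_mul] at hx
        exact lt_irrefl 0 hx
      exact (ae_neBot.mpr hμne).ne (Filter.eventually_false_iff_eq_bot.mp this)
    have hgpos : ∀ᵐ x ∂μ, 0 < p x / x := by
      filter_upwards [hf'pos, heq, hpae, hxpos] with x hx hxe hpx hxp
      have hgx : 0 < (p x / x) ^ ((1:ℝ)/3) := by
        by_contra hng
        push_neg at hng
        have : f' x ≤ 0 := by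
          rw [hxe]
          rcases le_or_gt (c⁻¹) 0 with h | h
          · exact mul_nonpos_of_nonpos_of_nonneg h (Real.rpow_nonneg (div_nonneg hpx hxp.le) _)
          · exact mul_nonpos_of_nonneg_of_nonpos h.le hng
        linarith
      by_contra hle
      push_neg at hle
      have : p x / x = 0 := le_antisymm hle (div_nonneg hpx hxp.le)
      rw [this, Real.zero_rpow (by norm_num)] at hgx
      exact lt_irrefl 0 hgx
    have hcpos : 0 < c := lt_of_le_of_ne hA (Ne.symm hcne)
    have hLcg : ∀ᵐ x ∂μ, L x = c ^ 2 * g x := by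
      filter_upwards [heq, hgpos, hxpos] with x hxe hgx hxp
      set q : ℝ := (p x / x) ^ ((1:ℝ)/3) with hqdef
      have hqpos : 0 < q := Real.rpow_pos_of_pos hgx _
      have hq3 : q ^ 3 = p x / x := by
        rw [hqdef, ← Real.rpow_natCast ((p x / x) ^ ((1:ℝ)/3)) 3,
          ← Real.rpow_mul hgx.le]
        norm_num
      show p x * f' x ^ (-2 : ℝ) * x⁻¹ = c ^ 2 * q
      rw [hxe]
      have hpos : 0 < c⁻¹ * q := mul_pos (inv_pos.mpr hcpos) hqpos
      rw [show (-2 : ℝ) = -(2:ℝ) from by norm_num, Real.rpow_neg hpos.le, Real.rpow_two]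
      have hpx' : p x = (p x / x) * x := by field_simp
      rw [hpx', ← hq3]
      field_simp
    have hc3 : (∫ x, L x ∂μ) = c ^ 3 := by
      rw [integral_congr_ae hLcg, integral_const_mul _ _]
      have : (∫ x, g x ∂μ) = c := rfl
      rw [this]; ring
    rw [hc3]
end

section
/- Let a, b > 0 with a√(a+b) = 2 and let p(x) = (a x^{1/3} + b x^{4/3})^{-3/2} on [0,1]. Then ∫₀¹ x·p(x) dx = −a/b + (a/b)·√(a/b + 1)·ArcSinh(√(b/a)). -/
open Real Set

lemma deriv_lem (a b : ℝ) (ha : 0 < a) (hb : 0 < b) (x : ℝ) (hx : 0 < x) :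
    HasDerivAt (fun x : ℝ => (2/(b*Real.sqrt b)) * Real.arsinh (Real.sqrt (b/a) * Real.sqrt x)
        - (2/b) * (Real.sqrt x * (a+b*x) ^ (-(1:ℝ)/2)))
      (Real.sqrt x * (a+b*x) ^ (-(3:ℝ)/2)) x := by
  have hy : 0 < a + b * x := by positivity
  have hxs : HasDerivAt (fun x : ℝ => Real.sqrt x) (1/(2*Real.sqrt x)) x :=
    Real.hasDerivAt_sqrt hx.ne'
  have h1 : HasDerivAt (fun x : ℝ => Real.sqrt (b/a) * Real.sqrt x)
      (Real.sqrt (b/a) * (1/(2*Real.sqrt x))) x := hxs.const_mul _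
  have h2 := (Real.hasDerivAt_arsinh (Real.sqrt (b/a) * Real.sqrt x)).comp x h1
  have h3 : HasDerivAt (fun x : ℝ => a + b * x) b x := by
    simpa using ((hasDerivAt_id x).const_mul b).const_add a
  have h4 := h3.rpow_const (p := -(1:ℝ)/2) (Or.inl hy.ne')
  have h5 := hxs.mul h4
  have h6 := ((h2.const_mul (2/(b*Real.sqrt b))).sub (h5.const_mul (2/b)))
  refine h6.congr_deriv ?_
  have hsx : Real.sqrt x ≠ 0 := by positivity
  have hsa : Real.sqrt a ≠ 0 := by positivity
  have hsy : Real.sqrt (a+b*x) ≠ 0 := by positivity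
  have hsb : Real.sqrt b ≠ 0 := by positivity
  have e1 : (a+b*x) ^ (-(1:ℝ)/2) = (Real.sqrt (a+b*x))⁻¹ := by
    rw [show (-(1:ℝ)/2) = -(1/2) by ring, Real.rpow_neg hy.le, Real.sqrt_eq_rpow]
  have e3 : (a+b*x) ^ (-(3:ℝ)/2) = ((a+b*x) * Real.sqrt (a+b*x))⁻¹ := by
    rw [show (-(3:ℝ)/2) = -(1+1/2) by ring, Real.rpow_neg hy.le, Real.rpow_add hy,
      Real.rpow_one, Real.sqrt_eq_rpow]
  have e2 : (a+b*x) ^ (-(1:ℝ)/2 - 1) = ((a+b*x) * Real.sqrt (a+b*x))⁻¹ := by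
    rw [show (-(1:ℝ)/2 - 1) = -(1+1/2) by ring, Real.rpow_neg hy.le, Real.rpow_add hy,
      Real.rpow_one, Real.sqrt_eq_rpow]
  have e4 : (Real.sqrt (b/a) * Real.sqrt x)^2 = b/a*x := by
    rw [mul_pow, Real.sq_sqrt (by positivity), Real.sq_sqrt hx.le]
  have e5 : Real.sqrt (1 + b/a*x) = Real.sqrt (a+b*x) / Real.sqrt a := by
    rw [show 1 + b/a*x = (a+b*x)/a by field_simp, Real.sqrt_div hy.le]
  have e6 : Real.sqrt (b/a) = Real.sqrt b / Real.sqrt a := Real.sqrt_div hb.le a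
  have hx2 : Real.sqrt x * Real.sqrt x = x := Real.mul_self_sqrt hx.le
  have ha2 : Real.sqrt a * Real.sqrt a = a := Real.mul_self_sqrt ha.le
  have hy2 : Real.sqrt (a+b*x) * Real.sqrt (a+b*x) = a+b*x := Real.mul_self_sqrt hy.le
  have hb2 : Real.sqrt b * Real.sqrt b = b := Real.mul_self_sqrt hb.le
  rw [e1, e2, e3, e4, e5, e6]
  field_simp
  ring_nf

/-- The mean of the maximin density: for `a, b > 0` with `a√(a+b) = 2` and
`p(x) = (a x^{1/3} + b x^{4/3})^{-3/2}` on `[0,1]`,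
`∫₀¹ x·p(x) dx = −a/b + (a/b)·√(a/b + 1)·ArcSinh(√(b/a))`. -/
theorem stmt_16 (a b : ℝ) (ha : 0 < a) (hb : 0 < b)
    (hnorm : a * Real.sqrt (a + b) = 2) :
    ∫ x in (0 : ℝ)..1,
        x * (a * x ^ ((1 : ℝ) / 3) + b * x ^ ((4 : ℝ) / 3)) ^ (-(3 : ℝ) / 2)
      = -a / b + (a / b) * Real.sqrt (a / b + 1) * Real.arsinh (Real.sqrt (b / a)) := by
  set g : ℝ → ℝ := fun x => Real.sqrt x * (a+b*x) ^ (-(3:ℝ)/2) with hg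
  set G : ℝ → ℝ := fun x => (2/(b*Real.sqrt b)) * Real.arsinh (Real.sqrt (b/a) * Real.sqrt x)
        - (2/b) * (Real.sqrt x * (a+b*x) ^ (-(1:ℝ)/2)) with hG
  -- step 1: rewrite the integrand
  have hcong : ∫ x in (0:ℝ)..1,
      x * (a * x ^ ((1 : ℝ) / 3) + b * x ^ ((4 : ℝ) / 3)) ^ (-(3 : ℝ) / 2)
      = ∫ x in (0:ℝ)..1, g x := by
    apply intervalIntegral.integral_congr
    intro x hx
    rw [Set.uIcc_of_le (by norm_num : (0:ℝ) ≤ 1)] at hx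
    rcases eq_or_lt_of_le hx.1 with h0 | h0
    · subst h0
      simp [hg, Real.zero_rpow, show ((1:ℝ)/3) ≠ 0 by norm_num,
        show ((4:ℝ)/3) ≠ 0 by norm_num, Real.zero_rpow (show (-(3:ℝ)/2) ≠ 0 by norm_num)]
    · have hy : 0 < a + b * x := by positivity
      have key : a * x ^ ((1:ℝ)/3) + b * x ^ ((4:ℝ)/3) = x ^ ((1:ℝ)/3) * (a + b*x) := by
        rw [show ((4:ℝ)/3) = 1/3 + 1 by norm_num, Real.rpow_add h0, Real.rpow_one]
        ring
      simp only [hg, key]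
      rw [Real.mul_rpow (Real.rpow_nonneg h0.le _) hy.le,
        ← Real.rpow_mul h0.le, Real.sqrt_eq_rpow, ← mul_assoc]
      congr 1
      nth_rewrite 1 [← Real.rpow_one x]
      rw [← Real.rpow_add h0]
      norm_num
  rw [hcong]
  have hab : 0 < a + b := by positivity
  have hsb : Real.sqrt b ≠ 0 := by positivity
  have hcy : ∀ p : ℝ, ContinuousOn (fun x : ℝ => (a+b*x) ^ p) (Icc 0 1) := by
    intro p x hx
    have hyx : a + b * x ≠ 0 := by nlinarith [hx.1]
    exact (ContinuousAt.rpow_const ((continuous_const.add (continuous_const.mul continuous_id)).continuousAt) (Or.inl hyx)).continuousWithinAt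
  have hGcont : ContinuousOn G (Icc 0 1) := by
    apply ContinuousOn.sub
    · exact (continuous_const.mul (Real.continuous_arsinh.comp
        (continuous_const.mul Real.continuous_sqrt))).continuousOn
    · exact continuousOn_const.mul (Real.continuous_sqrt.continuousOn.mul (hcy _))
  have hgcont : ContinuousOn g (Icc 0 1) :=
    Real.continuous_sqrt.continuousOn.mul (hcy _)
  have hint : IntervalIntegrable g MeasureTheory.volume 0 1 := by
    apply hgcont.intervalIntegrable_of_Icc (by norm_num)
  have hderiv : ∀ x ∈ Ioo (0:ℝ) 1, HasDerivWithinAt G (g x) (Ioi x) x := fun x hx =>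
    (deriv_lem a b ha hb x hx.1).hasDerivWithinAt
  rw [intervalIntegral.integral_eq_sub_of_hasDeriv_right_of_le (by norm_num) hGcont hderiv hint]
  have hG0 : G 0 = 0 := by simp [hG]
  have hG1 : G 1 = 2/(b*Real.sqrt b) * Real.arsinh (Real.sqrt (b/a))
      - 2/b * ((a+b) ^ (-(1:ℝ)/2)) := by simp [hG]
  rw [hG0, hG1, sub_zero]
  have hsab : Real.sqrt (a+b) = 2/a := by
    field_simp
    linarith [hnorm]
  have e1 : (a+b) ^ (-(1:ℝ)/2) = a/2 := by
    rw [show (-(1:ℝ)/2) = -(1/2) by ring, Real.rpow_neg hab.le, ← Real.sqrt_eq_rpow, hsab]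
    field_simp
  have e2 : Real.sqrt (a/b + 1) = (2/a) / Real.sqrt b := by
    rw [show a/b + 1 = (a+b)/b by field_simp, Real.sqrt_div hab.le, hsab]
  rw [e1, e2]
  field_simp
  ring
end

section
/- Define E(r) = −1/r + (√(1/r + 1)/r)·log(√r + √(r+1)) for r > 0. Then for all r > 0, E(r) ≥ (1/3)·(log r)/r, and for all r > 3, E(r) ≤ (1/2)·(log r)/r. -/
open Real

lemma sinh_le_mul_cosh {t : ℝ} (ht : 0 ≤ t) : Real.sinh t ≤ t * Real.cosh t := by
  have h : ∀ y : ℝ, HasDerivAt (fun y => y * Real.cosh y - Real.sinh y) (y * Real.sinh y) y := by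
    intro y
    have h1 := (hasDerivAt_id y).mul (Real.hasDerivAt_cosh y)
    have h2 := Real.hasDerivAt_sinh y
    have := h1.sub h2
    refine this.congr_deriv ?_
    simp [id_eq]
    try ring
  have mono : MonotoneOn (fun y => y * Real.cosh y - Real.sinh y) (Set.Ici 0) := by
    apply monotoneOn_of_deriv_nonneg (convex_Ici 0)
    · exact ((continuous_id.mul Real.continuous_cosh).sub Real.continuous_sinh).continuousOn
    · exact fun y _ => ((h y).differentiableAt).differentiableWithinAt
    · intro y hy
      rw [interior_Ici, Set.mem_Ioi] at hy
      rw [(h y).deriv]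
      exact mul_nonneg hy.le (Real.sinh_nonneg_iff.2 hy.le)
  have h0 := mono Set.self_mem_Ici ht ht
  simpa using h0

lemma artanh_bound {x : ℝ} (hx : 1 ≤ x) : 2 * (x - 1) / (x + 1) ≤ Real.log x := by
  have hx0 : 0 < x := by linarith
  set t := Real.log x / 2 with ht_def
  have ht : 0 ≤ t := by
    have := Real.log_nonneg hx
    positivity
  have hc : Real.exp t ^ 2 = x := by
    rw [← Real.exp_nat_mul]
    rw [show (2:ℕ) * t = Real.log x by push_cast [ht_def]; ring, Real.exp_log hx0]
  have hsinh := sinh_le_mul_cosh ht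
  rw [Real.sinh_eq, Real.cosh_eq] at hsinh
  set c := Real.exp t with hcdef
  have hcpos : 0 < c := Real.exp_pos t
  have hcinv : Real.exp (-t) = c⁻¹ := by rw [Real.exp_neg]
  rw [hcinv] at hsinh
  have hx1 : 0 < x + 1 := by linarith
  rw [div_le_iff₀ hx1]
  have hlog : Real.log x = 2 * t := by rw [ht_def]; ring
  rw [hlog]
  have hci : c * c⁻¹ = 1 := mul_inv_cancel₀ hcpos.ne'
  nlinarith [mul_le_mul_of_nonneg_left hsinh (le_of_lt hcpos), hc, hci, hcpos]

set_option maxHeartbeats 1000000 in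
/-- Bounds on `E(r) = −1/r + (√(1/r + 1)/r)·log(√r + √(r+1))`: for all `r > 0`,
`E(r) ≥ (1/3)(log r)/r`, and for all `r > 3`, `E(r) ≤ (1/2)(log r)/r`. -/
theorem stmt_17 :
    (∀ r : ℝ, 0 < r →
      (1 / 3) * Real.log r / r
        ≤ -1 / r + (Real.sqrt (1 / r + 1) / r) * Real.log (Real.sqrt r + Real.sqrt (r + 1)))
    ∧ (∀ r : ℝ, 3 < r →
      -1 / r + (Real.sqrt (1 / r + 1) / r) * Real.log (Real.sqrt r + Real.sqrt (r + 1))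
        ≤ (1 / 2) * Real.log r / r) := by
  constructor
  · -- lower bound
    intro r hr
    set a := Real.sqrt r with ha_def
    set b := Real.sqrt (r + 1) with hb_def
    have ha : 0 < a := Real.sqrt_pos.2 hr
    have ha2 : a ^ 2 = r := Real.sq_sqrt hr.le
    have hb2 : b ^ 2 = r + 1 := Real.sq_sqrt (by linarith)
    have hb0 : 0 ≤ b := Real.sqrt_nonneg _
    have hsq : Real.sqrt (1 / r + 1) = b / a := by
      rw [show 1 / r + 1 = (r + 1) / r by field_simp; ring, Real.sqrt_div (by linarith) r]
    clear_value a b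
    have hb1 : 1 ≤ b := by nlinarith
    have hb : 0 < b := by linarith
    have hab : 1 ≤ a + b := by linarith
    set u := Real.log (a + b) with hu_def
    clear_value u
    have hu0 : 0 ≤ u := by rw [hu_def]; exact Real.log_nonneg hab
    set w := b - a with hw_def
    clear_value w
    have hw0 : 0 < w := by rw [hw_def]; nlinarith
    have hw1 : w * (a + b) = 1 := by rw [hw_def]; linear_combination hb2 - ha2
    have hwinv : w = (a + b)⁻¹ := eq_inv_of_mul_eq_one_left hw1
    have hlogw : Real.log w = -u := by rw [hwinv, Real.log_inv, ← hu_def]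
    set v := w ^ 2 with hv_def
    clear_value v
    have h1v : 1 - v = 2 * a * w := by rw [hv_def, hw_def]; linear_combination ha2 - hb2
    have h1v' : 1 + v = 2 * b * w := by rw [hv_def, hw_def]; linear_combination ha2 - hb2
    have hvpos : 0 < v := by rw [hv_def]; positivity
    have h1vpos : 0 < 1 - v := by rw [h1v]; positivity
    have hloga : Real.log a = u + Real.log (1 - v) - Real.log 2 := by
      have h2 : Real.log (1 - v) = Real.log 2 + Real.log a + Real.log w := by
        rw [h1v, Real.log_mul (by positivity) hw0.ne', Real.log_mul (by norm_num) ha.ne']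
      rw [h2, hlogw]; ring
    have hba : b / a = (1 + v) / (1 - v) := by
      rw [div_eq_div_iff ha.ne' h1vpos.ne', h1v, h1v']; ring
    have hlogr : Real.log r = 2 * Real.log a := by
      rw [← ha2, Real.log_pow]; norm_num
    have key : 1 / 3 * Real.log r ≤ -1 + b / a * u := by
      rw [hlogr]
      rcases le_or_gt a 1 with hc | hc
      · -- small r : log a ≤ 0 and (b/a)*u ≥ 1
        have hloga_np : Real.log a ≤ 0 := Real.log_nonpos ha.le hc
        have hart : 2 * ((a + b) - 1) / ((a + b) + 1) ≤ u := by
          rw [hu_def]; exact artanh_bound hab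
        have hx1 : 0 < (a + b) + 1 := by linarith
        have h3 : a ≤ b * (2 * ((a + b) - 1) / ((a + b) + 1)) := by
          rw [show b * (2 * ((a + b) - 1) / ((a + b) + 1)) =
              b * (2 * ((a + b) - 1)) / ((a + b) + 1) by ring]
          rw [le_div_iff₀ hx1]
          nlinarith [sq_nonneg (b * (2 - a) - (a ^ 2 - a + 2)), ha, hb, ha2, hb2,
            mul_pos (mul_pos ha ha) ha]
        have h4 : a ≤ b * u := h3.trans (mul_le_mul_of_nonneg_left hart hb.le)
        have h5 : 1 ≤ b / a * u := by
          rw [div_mul_eq_mul_div, le_div_iff₀ ha, one_mul]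
          linarith [h4]
        linarith
      · -- large r : a ≥ 1
        have hwub : w ≤ 0.41422 := by
          have hbs : (1.41421 : ℝ) ≤ b := by nlinarith
          have h6 : (2.41421 : ℝ) ≤ a + b := by linarith
          rw [hwinv]
          calc (a + b)⁻¹ ≤ (2.41421 : ℝ)⁻¹ := by
                apply inv_anti₀ (by norm_num) h6
            _ ≤ 0.41422 := by norm_num
        have hE : 2 - 2.7182818286 * w ≤ u := by
          have h1 : Real.log (Real.exp 1 * w) ≤ Real.exp 1 * w - 1 :=
            Real.log_le_sub_one_of_pos (by positivity)
          rw [Real.log_mul (Real.exp_ne_zero 1) hw0.ne', Real.log_exp, hlogw] at h1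
          have h2 := mul_le_mul_of_nonneg_right Real.exp_one_lt_d9.le hw0.le
          linarith
        have l2 : (0.6931471803 : ℝ) ≤ Real.log 2 := Real.log_two_gt_d9.le
        have keypoly : 1 - 2 / 3 * Real.log 2 ≤ u / 3 + 2 * u * v + 2 / 3 * v := by
          rw [hv_def]
          nlinarith [hE, hwub, hw0, hu0, l2, sq_nonneg (w - 0.18763),
            mul_nonneg (by linarith : (0:ℝ) ≤ u - (2 - 2.7182818286 * w)) (sq_nonneg w),
            mul_nonneg (by linarith : (0:ℝ) ≤ 0.41422 - w) (sq_nonneg w)]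
        have hlog1v : Real.log (1 - v) ≤ -v := by
          have := Real.log_le_sub_one_of_pos h1vpos; linarith
        have hdiv : u + 2 * u * v ≤ (1 + v) / (1 - v) * u := by
          rw [div_mul_eq_mul_div, le_div_iff₀ h1vpos]
          nlinarith [mul_nonneg (mul_nonneg hu0 hvpos.le) hvpos.le]
        rw [hloga, hba]
        linarith
    rw [hsq]
    have e1 : -1 / r + b / a / r * u = (-1 + b / a * u) / r := by ring
    rw [e1]
    gcongr
  · -- upper bound
    intro r hr
    have hr0 : 0 < r := by linarith
    set a := Real.sqrt r with ha_def
    set b := Real.sqrt (r + 1) with hb_def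
    have ha : 0 < a := Real.sqrt_pos.2 hr0
    have ha2 : a ^ 2 = r := Real.sq_sqrt hr0.le
    have hb2 : b ^ 2 = r + 1 := Real.sq_sqrt (by linarith)
    have hb0 : 0 ≤ b := Real.sqrt_nonneg _
    have hsq : Real.sqrt (1 / r + 1) = b / a := by
      rw [show 1 / r + 1 = (r + 1) / r by field_simp; ring, Real.sqrt_div (by linarith) r]
    clear_value a b
    have ha3 : (1.732 : ℝ) ≤ a := by nlinarith
    have hb3 : 2 ≤ b := by nlinarith
    have hb : 0 < b := by linarith
    have hab : 1 ≤ a + b := by linarith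
    set u := Real.log (a + b) with hu_def
    clear_value u
    have hu0 : 0 ≤ u := by rw [hu_def]; exact Real.log_nonneg hab
    set w := b - a with hw_def
    clear_value w
    have hw0 : 0 < w := by rw [hw_def]; nlinarith
    have hw1 : w * (a + b) = 1 := by rw [hw_def]; linear_combination hb2 - ha2
    have hwinv : w = (a + b)⁻¹ := eq_inv_of_mul_eq_one_left hw1
    have hlogw : Real.log w = -u := by rw [hwinv, Real.log_inv, ← hu_def]
    set v := w ^ 2 with hv_def
    clear_value v
    have h1v : 1 - v = 2 * a * w := by rw [hv_def, hw_def]; linear_combination ha2 - hb2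
    have h1v' : 1 + v = 2 * b * w := by rw [hv_def, hw_def]; linear_combination ha2 - hb2
    have hvpos : 0 < v := by rw [hv_def]; positivity
    have h1vpos : 0 < 1 - v := by rw [h1v]; positivity
    have hloga : Real.log a = u + Real.log (1 - v) - Real.log 2 := by
      have h2 : Real.log (1 - v) = Real.log 2 + Real.log a + Real.log w := by
        rw [h1v, Real.log_mul (by positivity) hw0.ne', Real.log_mul (by norm_num) ha.ne']
      rw [h2, hlogw]; ring
    have hba : b / a = (1 + v) / (1 - v) := by
      rw [div_eq_div_iff ha.ne' h1vpos.ne', h1v, h1v']; ring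
    have hlogr : Real.log r = 2 * Real.log a := by
      rw [← ha2, Real.log_pow]; norm_num
    have hwub : w ≤ 0.268 := by
      have h6 : (3.732 : ℝ) ≤ a + b := by linarith
      rw [hwinv]
      calc (a + b)⁻¹ ≤ (3.732 : ℝ)⁻¹ := by
            apply inv_anti₀ (by norm_num) h6
        _ ≤ 0.268 := by norm_num
    have hlog4 : Real.log 4 = 2 * Real.log 2 := by
      rw [show (4:ℝ) = 2 ^ 2 by norm_num, Real.log_pow]; norm_num
    have huub : u ≤ 2 * Real.log 2 + (a + b) / 4 - 1 := by
      have h7 : Real.log ((a + b) / 4) ≤ (a + b) / 4 - 1 :=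
        Real.log_le_sub_one_of_pos (by positivity)
      have h8 : Real.log (a + b) = Real.log 4 + Real.log ((a + b) / 4) := by
        rw [← Real.log_mul (by norm_num) (by positivity)]
        congr 1
        ring
      rw [hu_def, h8, hlog4]
      linarith
    have huw : u * w ≤ (2 * Real.log 2 - 1) * w + 1 / 4 := by
      have h9 := mul_le_mul_of_nonneg_right huub hw0.le
      nlinarith [hw1]
    have l2u : Real.log 2 ≤ 0.6931471808 := Real.log_two_lt_d9.le
    have l2l : (0.6931471803 : ℝ) ≤ Real.log 2 := Real.log_two_gt_d9.le
    have keyB : 2 * u * v + (2 - Real.log 2) * v ≤ 1 - Real.log 2 := by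
      rw [hv_def]
      nlinarith [mul_le_mul_of_nonneg_right huw hw0.le, hw0, hwub, l2u, l2l,
        mul_nonneg (by linarith : (0:ℝ) ≤ 0.268 - w) hw0.le,
        mul_nonneg (by linarith : (0:ℝ) ≤ 0.6931471808 - Real.log 2) (sq_nonneg w)]
    have h1vlog : -v ≤ (1 - v) * Real.log (1 - v) := by
      have h10 : 1 - (1 - v)⁻¹ ≤ Real.log (1 - v) := Real.one_sub_inv_le_log_of_pos h1vpos
      have h11 := mul_le_mul_of_nonneg_left h10 h1vpos.le
      have h12 : (1 - v) * ((1 - v)⁻¹) = 1 := mul_inv_cancel₀ h1vpos.ne'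
      nlinarith
    have hdivB : (1 + v) / (1 - v) * u ≤ 1 + u + Real.log (1 - v) - Real.log 2 := by
      rw [div_mul_eq_mul_div, div_le_iff₀ h1vpos]
      nlinarith [h1vlog, keyB]
    have key : -1 + b / a * u ≤ 1 / 2 * Real.log r := by
      rw [hlogr, hloga, hba]
      linarith
    rw [hsq]
    have e1 : -1 / r + b / a / r * u = (-1 + b / a * u) / r := by ring
    rw [e1]
    gcongr
end

section
/- Let X, Z be random probability vectors on Δ_{K-1} with joint distribution arising from Z = z(X) for a measurable quantizer z, and suppose B ∈ 𝓑 is a random variable with A | B distributed according to X = x(B) ∈ Δ_{K-1}, where A takes values in a K-element alphabet. If h : 𝓑 → [M] is a distiller and z(x(b)) = E[X | h(B) = h(b)] for all b, then I(A;B) − I(A;h(B)) = E[D_KL(X ‖ z(X))]. -/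
open Finset
open scoped BigOperators

/-- Information distillation equals simplex quantization loss: for a joint pmf
`P` of `(A,B)` with `A ∈ Fin K`, a distiller `h : β → Fin M`, conditional
probability vectors `x(b)_a = P[A = a | B = b]`, and a quantizer `z` with
centroid decoding `z(x(b)) = E[X | h(B) = h(b)]`,
`I(A;B) − I(A;h(B)) = E[D_KL(X ‖ z(X))]`. -/
theorem stmt_18 (K M : ℕ) {β : Type*} [Fintype β]
    (P : Fin K → β → ℝ) (hP : ∀ a b, 0 ≤ P a b) (hPsum : ∑ a, ∑ b, P a b = 1)
    (h : β → Fin M)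
    (x : β → Fin K → ℝ) (hx : ∀ b a, x b a = P a b / ∑ a', P a' b)
    (z : (Fin K → ℝ) → Fin K → ℝ)
    (hz : ∀ b a, z (x b) a
        = (∑ b' ∈ Finset.univ.filter fun b' => h b' = h b, P a b')
          / ∑ b' ∈ Finset.univ.filter fun b' => h b' = h b, ∑ a', P a' b') :
    ((∑ a, ∑ b, P a b * Real.log (P a b / ((∑ b', P a b') * ∑ a', P a' b)))
        - ∑ a, ∑ j : Fin M,
            (∑ b ∈ Finset.univ.filter fun b => h b = j, P a b)
              * Real.log ((∑ b ∈ Finset.univ.filter fun b => h b = j, P a b)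
                / ((∑ b', P a b')
                    * ∑ b ∈ Finset.univ.filter fun b => h b = j, ∑ a', P a' b)))
      = ∑ b, (∑ a', P a' b) * ∑ a, x b a * Real.log (x b a / z (x b) a) := by
  classical
  set Pa : Fin K → ℝ := fun a => ∑ b', P a b' with hPa
  set Pb : β → ℝ := fun b => ∑ a', P a' b with hPbdef
  set Q : Fin K → Fin M → ℝ :=
    fun a j => ∑ b' ∈ Finset.univ.filter fun b' => h b' = j, P a b' with hQ
  set Qb : Fin M → ℝ :=
    fun j => ∑ b' ∈ Finset.univ.filter fun b' => h b' = j, Pb b' with hQb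
  have hPbnn : ∀ b, 0 ≤ Pb b := fun b => Finset.sum_nonneg fun a _ => hP a b
  -- Rewrite the RHS
  have hRHS : ∑ b, Pb b * ∑ a, x b a * Real.log (x b a / z (x b) a)
      = ∑ b, ∑ a, P a b * Real.log (x b a / z (x b) a) := by
    refine Finset.sum_congr rfl fun b _ => ?_
    by_cases hb : Pb b = 0
    · have hz0 : ∀ a, P a b = 0 := by
        intro a
        have := (Finset.sum_eq_zero_iff_of_nonneg (fun a _ => hP a b)).1 hb
        exact this a (Finset.mem_univ a)
      simp [hb, hz0]
    · rw [Finset.mul_sum]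
      refine Finset.sum_congr rfl fun a _ => ?_
      rw [hx b a, ← mul_assoc, mul_div_cancel₀ _ hb]
  rw [hRHS]
  -- Rewrite the second LHS sum via fiberwise summation
  have hFib : ∀ a : Fin K,
      (∑ j : Fin M, Q a j * Real.log (Q a j / (Pa a * Qb j)))
      = ∑ b, P a b * Real.log (Q a (h b) / (Pa a * Qb (h b))) := by
    intro a
    rw [← Finset.sum_fiberwise (s := Finset.univ) (g := h)
      (f := fun b => P a b * Real.log (Q a (h b) / (Pa a * Qb (h b))))]
    refine Finset.sum_congr rfl fun j _ => ?_
    rw [Finset.sum_mul]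
    refine Finset.sum_congr rfl fun b hb => ?_
    have : h b = j := (Finset.mem_filter.1 hb).2
    rw [this]
  have hLHS2 : (∑ a, ∑ j : Fin M, Q a j * Real.log (Q a j / (Pa a * Qb j)))
      = ∑ a, ∑ b, P a b * Real.log (Q a (h b) / (Pa a * Qb (h b))) :=
    Finset.sum_congr rfl fun a _ => hFib a
  rw [hLHS2, ← Finset.sum_sub_distrib, Finset.sum_comm]
  refine Finset.sum_congr rfl fun a _ => ?_
  rw [← Finset.sum_sub_distrib]
  refine Finset.sum_congr rfl fun b _ => ?_
  by_cases hab : P a b = 0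
  · simp [hab]
  have hab' : 0 < P a b := lt_of_le_of_ne (hP a b) (Ne.symm hab)
  have hPbpos : 0 < Pb b :=
    lt_of_lt_of_le hab' (Finset.single_le_sum (fun a' _ => hP a' b) (Finset.mem_univ a))
  have hPapos : 0 < Pa a :=
    lt_of_lt_of_le hab' (Finset.single_le_sum (fun b' _ => hP a b') (Finset.mem_univ b))
  have hbmem : b ∈ Finset.univ.filter fun b' => h b' = h b := by simp
  have hQpos : 0 < Q a (h b) :=
    lt_of_lt_of_le hab' (Finset.single_le_sum (fun b' _ => hP a b') hbmem)
  have hQbpos : 0 < Qb (h b) :=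
    lt_of_lt_of_le hPbpos (Finset.single_le_sum (fun b' _ => hPbnn b') hbmem)
  have hzv : z (x b) a = Q a (h b) / Qb (h b) := hz b a
  rw [hx b a, hzv, ← mul_sub]
  congr 1
  rw [Real.log_div hab (mul_ne_zero hPapos.ne' hPbpos.ne'),
    Real.log_div hQpos.ne' (mul_ne_zero hPapos.ne' hQbpos.ne'),
    Real.log_mul hPapos.ne' hPbpos.ne', Real.log_mul hPapos.ne' hQbpos.ne',
    Real.log_div (div_ne_zero hab hPbpos.ne') (div_ne_zero hQpos.ne' hQbpos.ne'),
    Real.log_div hab hPbpos.ne', Real.log_div hQpos.ne' hQbpos.ne']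
  ring
end
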